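/- Freedman-type inequality: Let (Ω, 𝒜, μ) be a probability space with a filtration 𝒜_0 ⊆ 𝒜_1 ⊆ … ⊆ 𝒜_T ⊆ 𝒜, and let X_1,…,X_T be real random variables with X_t measurable with respect to 𝒜_t and |X_t| ≤ R almost surely, where R > 0. Then for every δ ∈ (0,1) and every λ ∈ (0, 1/(2R)], with probability at least 1 − δ: |Σ_{t=1}^T ( X_t − E[X_t | 𝒜_{t−1}] )| ≤ λ·Σ_{t=1}^T ( 2R·|E[X_t | 𝒜_{t−1}]| + E[X_t² | 𝒜_{t−1}] ) + log(2/δ)/λ. -/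

import Mathlib

open Finset MeasureTheory

lemma exp_le_one_add_add_sq {x : ℝ} (hx : x ≤ 1) : Real.exp x ≤ 1 + x + x ^ 2 := by
  rcases le_or_gt x 0 with h | h
  · have h1 : 1 - x ≤ Real.exp (-x) := by
      have := Real.add_one_le_exp (-x); linarith
    have h2 : Real.exp x * Real.exp (-x) = 1 := by
      rw [← Real.exp_add]; simp
    nlinarith [Real.exp_pos x, Real.exp_pos (-x),
      mul_nonneg (mul_nonneg (neg_nonneg.2 h) (neg_nonneg.2 h)) (neg_nonneg.2 h),
      mul_le_mul_of_nonneg_left h1 (Real.exp_pos x).le]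
  · have hb := Real.exp_bound (x := x) (by rw [abs_of_pos h]; exact hx) (n := 3) (by norm_num)
    have h2 : Real.exp x ≤ (∑ i ∈ range 3, x ^ i / i.factorial)
        + |x| ^ 3 * ((3:ℕ).succ / ((3:ℕ).factorial * (3:ℕ))) := by
      have := abs_le.1 hb; push_cast at this ⊢; linarith [this.2]
    rw [abs_of_pos h] at h2
    simp [Finset.sum_range_succ, Nat.factorial] at h2
    nlinarith [sq_nonneg x, h.le, hx]

lemma int_of_bound {Ω : Type*} {m0 : MeasurableSpace Ω} {μ : Measure Ω} [IsFiniteMeasure μ]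
    {f : Ω → ℝ} (hf : AEStronglyMeasurable f μ) (C : ℝ) (h : ∀ᵐ ω ∂μ, |f ω| ≤ C) :
    Integrable f μ :=
  (integrable_const C).mono' hf (by simpa [Real.norm_eq_abs] using h)

lemma step_bound {Ω : Type*} {m0 : MeasurableSpace Ω} (μ : Measure Ω) [IsProbabilityMeasure μ]
    {m : MeasurableSpace Ω} (hm : m ≤ m0) {X : Ω → ℝ} (hX : Measurable[m0] X)
    {R : ℝ} (hR : 0 < R) (hb : ∀ᵐ ω ∂μ, |X ω| ≤ R)
    {c : ℝ} (hc : |c| * (2 * R) ≤ 1) :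
    μ[fun ω => Real.exp (c * (X ω - (μ[X|m]) ω)) | m]
      ≤ᵐ[μ] fun ω => Real.exp (c ^ 2 * (μ[fun ω' => X ω' ^ 2|m]) ω) := by
  set Y : Ω → ℝ := μ[X|m] with hYdef
  set W : Ω → ℝ := μ[fun ω' => X ω' ^ 2|m] with hWdef
  have hXas : AEStronglyMeasurable[m0] X μ := hX.aestronglyMeasurable
  have hXint : Integrable X μ := int_of_bound hXas R hb
  have hYsm : StronglyMeasurable[m] Y := stronglyMeasurable_condExp
  have hYint : Integrable Y μ := integrable_condExp
  have hYas : AEStronglyMeasurable[m0] Y μ := (hYsm.mono hm).aestronglyMeasurable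
  -- |Y| ≤ R a.e.
  have hYb : ∀ᵐ ω ∂μ, |Y ω| ≤ R := by
    have h1 : Y ≤ᵐ[μ] μ[fun _ => R|m] :=
      condExp_mono hXint (integrable_const R) (hb.mono fun ω h => (abs_le.1 h).2)
    have h2 : μ[fun _ => (-R : ℝ)|m] ≤ᵐ[μ] Y :=
      condExp_mono (integrable_const (-R)) hXint (hb.mono fun ω h => (abs_le.1 h).1)
    rw [condExp_const hm] at h1
    rw [condExp_const hm] at h2
    filter_upwards [h1, h2] with ω u1 u2
    exact abs_le.2 ⟨u2, u1⟩
  have hXsqas : AEStronglyMeasurable[m0] (fun ω => X ω ^ 2) μ := (hX.pow_const 2).aestronglyMeasurable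
  have hXsqint : Integrable (fun ω => X ω ^ 2) μ :=
    int_of_bound hXsqas (R ^ 2)
      (hb.mono fun ω h => by rw [abs_pow]; exact pow_le_pow_left₀ (abs_nonneg _) h 2)
  -- W ≥ 0 a.e.
  have hWnn : 0 ≤ᵐ[μ] W := condExp_nonneg (ae_of_all μ fun ω => sq_nonneg _)
  -- the centered variable
  set Z : Ω → ℝ := X - Y with hZdef
  have hZas : AEStronglyMeasurable[m0] Z μ := hXas.sub hYas
  have hZb : ∀ᵐ ω ∂μ, |Z ω| ≤ 2 * R := by
    filter_upwards [hb, hYb] with ω u1 u2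
    calc |Z ω| = |X ω - Y ω| := rfl
      _ ≤ |X ω| + |Y ω| := abs_sub _ _
      _ ≤ 2 * R := by linarith
  have hZint : Integrable Z μ := int_of_bound hZas (2 * R) hZb
  have hZZint : Integrable (Z * Z) μ :=
    int_of_bound (hZas.mul hZas) (2 * R * (2 * R))
      (hZb.mono fun ω h => by rw [Pi.mul_apply, abs_mul]; exact mul_le_mul h h (abs_nonneg _) (by linarith))
  -- conditional mean of Z is 0
  have hYcond : μ[Y|m] = Y := condExp_of_stronglyMeasurable hm hYsm hYint
  have hA : μ[Z|m] =ᵐ[μ] 0 := by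
    calc μ[Z|m] =ᵐ[μ] μ[X|m] - μ[Y|m] := condExp_sub hXint hYint m
      _ = Y - Y := by rw [hYcond]
      _ = 0 := by simp
  -- conditional second moment
  have hYXint : Integrable (Y * X) μ :=
    int_of_bound (hYas.mul hXas) (R * R)
      (by filter_upwards [hYb, hb] with ω u1 u2
          rw [Pi.mul_apply, abs_mul]
          exact mul_le_mul u1 u2 (abs_nonneg _) hR.le)
  have hYsqsm : StronglyMeasurable[m] (Y * Y) := hYsm.mul hYsm
  have hYsqint : Integrable (Y * Y) μ :=
    int_of_bound ((hYsqsm.mono hm).aestronglyMeasurable) (R * R)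
      (hYb.mono fun ω h => by rw [Pi.mul_apply, abs_mul]; exact mul_le_mul h h (abs_nonneg _) hR.le)
  have hpull : μ[Y * X|m] =ᵐ[μ] Y * Y := by
    have := condExp_mul_of_stronglyMeasurable_left hYsm hYXint hXint
    rw [← hYdef] at this
    exact this
  have hB : μ[Z * Z|m] ≤ᵐ[μ] W := by
    have hsplit : Z * Z = (fun ω => X ω ^ 2) - (2 : ℝ) • (Y * X) + Y * Y := by
      funext ω
      simp only [Pi.add_apply, Pi.sub_apply, Pi.smul_apply, Pi.mul_apply, Pi.sub_apply,
        hZdef, smul_eq_mul]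
      ring
    have e1 : μ[Z * Z|m] =ᵐ[μ] μ[(fun ω => X ω ^ 2) - (2 : ℝ) • (Y * X)|m] + μ[Y * Y|m] := by
      rw [hsplit]; exact condExp_add (hXsqint.sub (hYXint.smul (2:ℝ))) hYsqint m
    have e2 : μ[(fun ω => X ω ^ 2) - (2 : ℝ) • (Y * X)|m]
        =ᵐ[μ] μ[fun ω => X ω ^ 2|m] - μ[(2 : ℝ) • (Y * X)|m] :=
      condExp_sub hXsqint (hYXint.smul (2:ℝ)) m
    have e3 : μ[(2 : ℝ) • (Y * X)|m] =ᵐ[μ] (2 : ℝ) • μ[Y * X|m] := condExp_smul _ _ _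
    have e4 : μ[Y * Y|m] = Y * Y := condExp_of_stronglyMeasurable hm hYsqsm hYsqint
    filter_upwards [e1, e2, e3, hpull] with ω u1 u2 u3 u4
    rw [u1, e4, Pi.add_apply, Pi.mul_apply, u2, Pi.sub_apply, u3, Pi.smul_apply, u4, ← hWdef]
    simp only [Pi.mul_apply, smul_eq_mul]
    nlinarith [sq_nonneg (Y ω)]
  -- pointwise exponential bound
  have hcsq : (0:ℝ) ≤ c ^ 2 := sq_nonneg c
  have hexpas : AEStronglyMeasurable[m0] (fun ω => Real.exp (c * (X ω - Y ω))) μ := by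
    have hYm : Measurable[m0] Y := (hYsm.mono hm).measurable
    exact (Real.measurable_exp.comp ((hX.sub hYm).const_mul c)).aestronglyMeasurable
  have hexpint : Integrable (fun ω => Real.exp (c * (X ω - Y ω))) μ := by
    refine int_of_bound hexpas (Real.exp 1) ?_
    filter_upwards [hZb] with ω h
    rw [abs_of_pos (Real.exp_pos _)]
    apply Real.exp_le_exp.2
    calc c * (X ω - Y ω) ≤ |c * (X ω - Y ω)| := le_abs_self _
      _ = |c| * |Z ω| := by rw [← abs_mul]; rfl
      _ ≤ |c| * (2 * R) := by
          gcongr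
      _ ≤ 1 := hc
  set f : Ω → ℝ := (fun _ => (1:ℝ)) + c • Z + c ^ 2 • (Z * Z) with hfdef
  have hfint : Integrable f μ := ((integrable_const 1).add (hZint.smul c)).add (hZZint.smul (c ^ 2))
  have hptw : (fun ω => Real.exp (c * (X ω - Y ω))) ≤ᵐ[μ] f := by
    filter_upwards [hZb] with ω h
    have h1 : c * (X ω - Y ω) ≤ 1 := by
      calc c * (X ω - Y ω) ≤ |c * (X ω - Y ω)| := le_abs_self _
        _ = |c| * |Z ω| := by rw [← abs_mul]; rfl
        _ ≤ |c| * (2 * R) := by gcongr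
        _ ≤ 1 := hc
    have h2 := exp_le_one_add_add_sq h1
    simp only [hfdef, Pi.add_apply, Pi.smul_apply, Pi.mul_apply, smul_eq_mul]
    have hZω : Z ω = X ω - Y ω := rfl
    rw [hZω]
    nlinarith [h2]
  have hmono := condExp_mono (m := m) hexpint hfint hptw
  have hcf : μ[f|m] =ᵐ[μ] (fun _ => (1:ℝ)) + c • μ[Z|m] + c ^ 2 • μ[Z * Z|m] := by
    have e1 : μ[f|m] =ᵐ[μ] μ[(fun _ => (1:ℝ)) + c • Z|m] + μ[c ^ 2 • (Z * Z)|m] :=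
      condExp_add ((integrable_const 1).add (hZint.smul c)) (hZZint.smul (c ^ 2)) m
    have e2 : μ[(fun _ => (1:ℝ)) + c • Z|m] =ᵐ[μ] μ[(fun _ => (1:ℝ))|m] + μ[c • Z|m] :=
      condExp_add (integrable_const 1) (hZint.smul c) m
    have e3 : μ[(fun _ => (1:ℝ))|m] = fun _ => (1:ℝ) := condExp_const hm 1
    have e4 : μ[c • Z|m] =ᵐ[μ] c • μ[Z|m] := condExp_smul _ _ _
    have e5 : μ[c ^ 2 • (Z * Z)|m] =ᵐ[μ] c ^ 2 • μ[Z * Z|m] := condExp_smul _ _ _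
    filter_upwards [e1, e2, e4, e5] with ω u1 u2 u4 u5
    simp only [Pi.add_apply] at *
    rw [u1, u2, u4, u5, e3]
  refine hmono.trans ?_
  filter_upwards [hcf, hA, hB, hWnn] with ω u1 u2 u3 u4
  rw [u1]
  simp only [Pi.add_apply, Pi.smul_apply, smul_eq_mul, u2, Pi.zero_apply, mul_zero, add_zero]
  have h5 : c ^ 2 * (μ[Z * Z|m]) ω ≤ c ^ 2 * W ω := mul_le_mul_of_nonneg_left u3 hcsq
  have h6 := Real.add_one_le_exp (c ^ 2 * W ω)
  linarith


section
variable {Ω : Type*} {m0 : MeasurableSpace Ω} {μ : Measure Ω} [IsProbabilityMeasure μ]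

lemma condexp_abs_le {m : MeasurableSpace Ω} (hm : m ≤ m0) {X : Ω → ℝ}
    (hXint : Integrable X μ) {R : ℝ} (hb : ∀ᵐ ω ∂μ, |X ω| ≤ R) :
    ∀ᵐ ω ∂μ, |(μ[X|m]) ω| ≤ R := by
  have h1 : μ[X|m] ≤ᵐ[μ] μ[fun _ => R|m] :=
    condExp_mono hXint (integrable_const R) (hb.mono fun ω h => (abs_le.1 h).2)
  have h2 : μ[fun _ => (-R : ℝ)|m] ≤ᵐ[μ] μ[X|m] :=
    condExp_mono (integrable_const (-R)) hXint (hb.mono fun ω h => (abs_le.1 h).1)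
  rw [condExp_const hm] at h1
  rw [condExp_const hm] at h2
  filter_upwards [h1, h2] with ω u1 u2
  exact abs_le.2 ⟨u2, u1⟩

lemma super_bound
    (T : ℕ) (𝒜 : ℕ → MeasurableSpace Ω)
    (hmono : ∀ i j, i ≤ j → 𝒜 i ≤ 𝒜 j) (hle : ∀ i, 𝒜 i ≤ m0)
    (X : ℕ → Ω → ℝ) (R : ℝ) (hR : 0 < R)
    (hmeas : ∀ t ∈ Finset.Icc 1 T, Measurable[𝒜 t] (X t))
    (hbdd : ∀ t ∈ Finset.Icc 1 T, ∀ᵐ ω ∂μ, |X t ω| ≤ R)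
    (c : ℝ) (hc : |c| * (2 * R) ≤ 1)
    (n : ℕ) (hn : n ≤ T) :
    ∫ ω, Real.exp (c * ∑ t ∈ Finset.Icc 1 n, (X t ω - (μ[X t | 𝒜 (t - 1)]) ω)
        - c ^ 2 * ∑ t ∈ Finset.Icc 1 n, (μ[fun ω' => X t ω' ^ 2 | 𝒜 (t - 1)]) ω) ∂μ ≤ 1 := by
  induction n with
  | zero => simp
  | succ n ih =>
    have hn' : n ≤ T := Nat.le_of_succ_le hn
    specialize ih hn'
    -- notation
    set Y : ℕ → Ω → ℝ := fun t => μ[X t | 𝒜 (t - 1)] with hYdef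
    set W : ℕ → Ω → ℝ := fun t => μ[fun ω' => X t ω' ^ 2 | 𝒜 (t - 1)] with hWdef
    have hmem : ∀ t, t ∈ Finset.Icc 1 n → t ∈ Finset.Icc 1 T := fun t ht => by
      simp only [Finset.mem_Icc] at *; omega
    have hmem1 : n + 1 ∈ Finset.Icc 1 T := by simp only [Finset.mem_Icc]; omega
    -- basic measurability/bounds for t in range
    have hXm : ∀ t ∈ Finset.Icc 1 T, Measurable[m0] (X t) :=
      fun t ht => (hmeas t ht).mono (hle t) le_rfl
    have hXint : ∀ t ∈ Finset.Icc 1 T, Integrable (X t) μ :=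
      fun t ht => int_of_bound (hXm t ht).aestronglyMeasurable R (hbdd t ht)
    have hYb : ∀ t ∈ Finset.Icc 1 T, ∀ᵐ ω ∂μ, |Y t ω| ≤ R :=
      fun t ht => condexp_abs_le (hle _) (hXint t ht) (hbdd t ht)
    have hWnn : ∀ t, 0 ≤ᵐ[μ] W t :=
      fun t => condExp_nonneg (ae_of_all μ fun ω => sq_nonneg _)
    -- strong measurability wrt 𝒜 n of the "past" part
    have hYsm : ∀ t, StronglyMeasurable[𝒜 (t - 1)] (Y t) := fun t => stronglyMeasurable_condExp
    have hWsm : ∀ t, StronglyMeasurable[𝒜 (t - 1)] (W t) := fun t => stronglyMeasurable_condExp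
    set G : Ω → ℝ := fun ω =>
      Real.exp (c * ∑ t ∈ Finset.Icc 1 n, (X t ω - Y t ω)
        - c ^ 2 * ∑ t ∈ Finset.Icc 1 n, W t ω - c ^ 2 * W (n + 1) ω) with hGdef
    have hGsm : StronglyMeasurable[𝒜 n] G := by
      apply Measurable.stronglyMeasurable
      apply Real.measurable_exp.comp
      apply Measurable.sub
      apply Measurable.sub
      · apply Measurable.const_mul
        apply Finset.measurable_sum
        intro t ht
        have h1 : t ≤ n := (Finset.mem_Icc.1 ht).2
        exact ((hmeas t (hmem t ht)).mono (hmono t n h1) le_rfl).sub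
          (((hYsm t).measurable.mono (hmono (t-1) n (by omega)) le_rfl))
      · apply Measurable.const_mul
        apply Finset.measurable_sum
        intro t ht
        have h1 : t ≤ n := (Finset.mem_Icc.1 ht).2
        exact (hWsm t).measurable.mono (hmono (t-1) n (by omega)) le_rfl
      · apply Measurable.const_mul
        have : (n + 1) - 1 = n := by omega
        exact (hWsm (n+1)).measurable.mono (by rw [this]) le_rfl
    have hGm0 : Measurable[m0] G := (hGsm.mono (hle n)).measurable
    -- a.e. bounds on G
    have hall : ∀ᵐ ω ∂μ, ∀ t ∈ Finset.Icc 1 T, |X t ω| ≤ R ∧ |Y t ω| ≤ R := by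
      rw [Filter.eventually_all_finset]
      intro t ht
      filter_upwards [hbdd t ht, hYb t ht] with ω u1 u2 using ⟨u1, u2⟩
    have hallW : ∀ᵐ ω ∂μ, ∀ t ∈ Finset.Icc 1 (n+1), 0 ≤ W t ω := by
      rw [Filter.eventually_all_finset]
      intro t _; exact hWnn t
    have hGb : ∀ᵐ ω ∂μ, |G ω| ≤ Real.exp n := by
      filter_upwards [hall, hallW] with ω u1 u2
      rw [hGdef, abs_of_pos (Real.exp_pos _), Real.exp_le_exp]
      have hS : c * ∑ t ∈ Finset.Icc 1 n, (X t ω - Y t ω) ≤ n := by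
        calc c * ∑ t ∈ Finset.Icc 1 n, (X t ω - Y t ω)
            ≤ |c * ∑ t ∈ Finset.Icc 1 n, (X t ω - Y t ω)| := le_abs_self _
          _ = |c| * |∑ t ∈ Finset.Icc 1 n, (X t ω - Y t ω)| := abs_mul _ _
          _ ≤ |c| * ∑ t ∈ Finset.Icc 1 n, |X t ω - Y t ω| := by
              gcongr; exact Finset.abs_sum_le_sum_abs _ _
          _ = ∑ t ∈ Finset.Icc 1 n, |c| * |X t ω - Y t ω| := Finset.mul_sum _ _ _
          _ ≤ ∑ t ∈ Finset.Icc 1 n, 1 := by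
              apply Finset.sum_le_sum
              intro t ht
              obtain ⟨u1a, u1b⟩ := u1 t (hmem t ht)
              calc |c| * |X t ω - Y t ω| ≤ |c| * (2 * R) := by
                    gcongr
                    calc |X t ω - Y t ω| ≤ |X t ω| + |Y t ω| := abs_sub _ _
                      _ ≤ 2 * R := by linarith
                _ ≤ 1 := hc
          _ = n := by simp
      have hV : 0 ≤ c ^ 2 * ∑ t ∈ Finset.Icc 1 n, W t ω := by
        apply mul_nonneg (sq_nonneg c)
        apply Finset.sum_nonneg
        intro t ht
        exact u2 t (by simp only [Finset.mem_Icc] at *; omega)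
      have hW1 : 0 ≤ c ^ 2 * W (n+1) ω :=
        mul_nonneg (sq_nonneg c) (u2 (n+1) (by simp only [Finset.mem_Icc]; omega))
      linarith
    have hGnn : ∀ ω, 0 ≤ G ω := fun ω => (Real.exp_pos _).le
    have hGint : Integrable G μ := int_of_bound hGm0.aestronglyMeasurable _ hGb
    -- the new increment
    set E : Ω → ℝ := fun ω => Real.exp (c * (X (n+1) ω - Y (n+1) ω)) with hEdef
    have hn1 : (n + 1) - 1 = n := by omega
    have hEm0 : Measurable[m0] E := by
      apply Real.measurable_exp.comp
      exact ((hXm (n+1) hmem1).sub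
        ((hYsm (n+1)).measurable.mono (hle _) le_rfl)).const_mul c
    have hEb : ∀ᵐ ω ∂μ, |E ω| ≤ Real.exp 1 := by
      filter_upwards [hbdd (n+1) hmem1, hYb (n+1) hmem1] with ω u1 u2
      rw [hEdef, abs_of_pos (Real.exp_pos _), Real.exp_le_exp]
      calc c * (X (n+1) ω - Y (n+1) ω) ≤ |c| * |X (n+1) ω - Y (n+1) ω| := by
            rw [← abs_mul]; exact le_abs_self _
        _ ≤ |c| * (2 * R) := by
            gcongr
            calc |X (n+1) ω - Y (n+1) ω| ≤ |X (n+1) ω| + |Y (n+1) ω| := abs_sub _ _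
              _ ≤ 2 * R := by linarith
        _ ≤ 1 := hc
    have hEint : Integrable E μ := int_of_bound hEm0.aestronglyMeasurable _ hEb
    have hGEint : Integrable (G * E) μ := by
      apply int_of_bound ((hGm0.mul hEm0).aestronglyMeasurable) (Real.exp n * Real.exp 1)
      filter_upwards [hGb, hEb] with ω u1 u2
      rw [Pi.mul_apply, abs_mul]
      exact mul_le_mul u1 u2 (abs_nonneg _) (Real.exp_pos _).le
    -- key conditional bound
    have hXsqint : Integrable (fun ω => X (n+1) ω ^ 2) μ :=
      int_of_bound ((hXm (n+1) hmem1).pow_const 2).aestronglyMeasurable (R ^ 2)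
        ((hbdd (n+1) hmem1).mono fun ω h => by
          rw [abs_pow]; exact pow_le_pow_left₀ (abs_nonneg _) h 2)
    have hWub : ∀ᵐ ω ∂μ, |W (n+1) ω| ≤ R ^ 2 :=
      condexp_abs_le (hle _) hXsqint
        ((hbdd (n+1) hmem1).mono fun ω h => by
          rw [abs_pow]; exact pow_le_pow_left₀ (abs_nonneg _) h 2)
    have hkey : μ[E | 𝒜 n] ≤ᵐ[μ] fun ω => Real.exp (c ^ 2 * (μ[fun ω' => X (n+1) ω' ^ 2 | 𝒜 n]) ω) := by
      have := step_bound μ (hle n) (hXm (n+1) hmem1) hR (hbdd (n+1) hmem1) hc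
      simp only [hEdef, hYdef, hn1] at *
      exact this
    -- splitting of the integrand
    have hsplit : (fun ω => Real.exp (c * ∑ t ∈ Finset.Icc 1 (n+1), (X t ω - Y t ω)
        - c ^ 2 * ∑ t ∈ Finset.Icc 1 (n+1), W t ω)) = G * E := by
      funext ω
      rw [Pi.mul_apply, hGdef, hEdef, ← Real.exp_add]
      congr 1
      rw [Finset.sum_Icc_succ_top (by omega : 1 ≤ n + 1),
        Finset.sum_Icc_succ_top (by omega : 1 ≤ n + 1)]
      ring
    rw [hsplit]
    -- main computation
    have e1 : ∫ ω, (G * E) ω ∂μ = ∫ ω, (μ[G * E | 𝒜 n]) ω ∂μ := (integral_condExp (hle n)).symm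
    have e2 : μ[G * E | 𝒜 n] =ᵐ[μ] G * μ[E | 𝒜 n] :=
      condExp_mul_of_stronglyMeasurable_left hGsm hGEint hEint
    have hWc : μ[fun ω' => X (n+1) ω' ^ 2 | 𝒜 n] = W (n+1) := by
      rw [hWdef]; simp only [hn1]
    rw [hWc] at hkey
    have e3 : ∫ ω, (μ[G * E | 𝒜 n]) ω ∂μ ≤ ∫ ω, G ω * Real.exp (c ^ 2 * W (n+1) ω) ∂μ := by
      apply integral_mono_ae
      · exact integrable_condExp
      · refine int_of_bound ?_ (Real.exp n * Real.exp (1/4)) ?_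
        · exact (hGm0.mul (Real.measurable_exp.comp
            ((((hWsm (n+1)).measurable.mono (hle _) le_rfl)).const_mul
              (c^2)))).aestronglyMeasurable
        · filter_upwards [hGb, hWub] with ω u1 u2
          have h4 : |Real.exp (c ^ 2 * W (n+1) ω)| ≤ Real.exp (1/4) := by
            rw [abs_of_pos (Real.exp_pos _), Real.exp_le_exp]
            have hc2 : c ^ 2 * (2 * R) ^ 2 ≤ 1 := by
              have := mul_le_mul hc hc (by positivity) (by norm_num : (0:ℝ) ≤ 1)
              nlinarith [sq_abs c]
            have h3 : W (n+1) ω ≤ R ^ 2 := (abs_le.1 u2).2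
            nlinarith [sq_nonneg c, hR.le]
          rw [abs_mul]
          exact mul_le_mul u1 h4 (abs_nonneg _) (Real.exp_pos _).le
      · filter_upwards [e2, hkey] with ω u1 u2
        rw [u1]
        simp only [Pi.mul_apply]
        exact mul_le_mul_of_nonneg_left u2 (hGnn ω)
    have e4 : (fun ω => G ω * Real.exp (c ^ 2 * W (n+1) ω))
        = fun ω => Real.exp (c * ∑ t ∈ Finset.Icc 1 n, (X t ω - Y t ω)
            - c ^ 2 * ∑ t ∈ Finset.Icc 1 n, W t ω) := by
      funext ω
      rw [hGdef, ← Real.exp_add]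
      congr 1
      ring
    calc ∫ ω, (G * E) ω ∂μ = ∫ ω, (μ[G * E | 𝒜 n]) ω ∂μ := e1
      _ ≤ ∫ ω, G ω * Real.exp (c ^ 2 * W (n+1) ω) ∂μ := e3
      _ ≤ 1 := by rw [e4]; exact ih

end


/-- **Freedman-type inequality.** -/
theorem freedman_inequality
    {Ω : Type*} {m0 : MeasurableSpace Ω} (μ : Measure Ω) [IsProbabilityMeasure μ]
    (T : ℕ) (𝒜 : ℕ → MeasurableSpace Ω)
    (hmono : ∀ i j, i ≤ j → 𝒜 i ≤ 𝒜 j) (hle : ∀ i, 𝒜 i ≤ m0)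
    (X : ℕ → Ω → ℝ) (R : ℝ) (hR : 0 < R)
    (hmeas : ∀ t ∈ Finset.Icc 1 T, Measurable[𝒜 t] (X t))
    (hbdd : ∀ t ∈ Finset.Icc 1 T, ∀ᵐ ω ∂μ, |X t ω| ≤ R)
    (δ : ℝ) (hδ : 0 < δ) (hδ1 : δ < 1)
    (lam : ℝ) (hlam : 0 < lam) (hlamR : lam ≤ 1 / (2 * R)) :
    ENNReal.ofReal (1 - δ) ≤
      μ {ω | |∑ t ∈ Finset.Icc 1 T, (X t ω - (μ[X t | 𝒜 (t - 1)]) ω)|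
          ≤ lam * ∑ t ∈ Finset.Icc 1 T,
              (2 * R * |(μ[X t | 𝒜 (t - 1)]) ω|
                + (μ[fun ω' => (X t ω') ^ 2 | 𝒜 (t - 1)]) ω)
            + Real.log (2 / δ) / lam} := by
  have h2R : (0:ℝ) < 2 * R := by linarith
  have hc1 : |lam| * (2 * R) ≤ 1 := by
    rw [abs_of_pos hlam]
    rw [le_div_iff₀ h2R] at hlamR
    linarith
  have hc2 : |(-lam)| * (2 * R) ≤ 1 := by rwa [abs_neg]
  set Y : ℕ → Ω → ℝ := fun t => μ[X t | 𝒜 (t - 1)] with hYdef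
  set W : ℕ → Ω → ℝ := fun t => μ[fun ω' => X t ω' ^ 2 | 𝒜 (t - 1)] with hWdef
  set S : Ω → ℝ := fun ω => ∑ t ∈ Finset.Icc 1 T, (X t ω - Y t ω) with hSdef
  set V : Ω → ℝ := fun ω => ∑ t ∈ Finset.Icc 1 T, W t ω with hVdef
  set L : ℝ := Real.log (2 / δ) with hLdef
  have hXm : ∀ t ∈ Finset.Icc 1 T, Measurable[m0] (X t) :=
    fun t ht => (hmeas t ht).mono (hle t) le_rfl
  have hXint : ∀ t ∈ Finset.Icc 1 T, Integrable (X t) μ :=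
    fun t ht => int_of_bound (hXm t ht).aestronglyMeasurable R (hbdd t ht)
  have hYb : ∀ t ∈ Finset.Icc 1 T, ∀ᵐ ω ∂μ, |Y t ω| ≤ R :=
    fun t ht => condexp_abs_le (hle _) (hXint t ht) (hbdd t ht)
  have hWnn : ∀ t, 0 ≤ᵐ[μ] W t :=
    fun t => condExp_nonneg (ae_of_all μ fun ω => sq_nonneg _)
  have hall : ∀ᵐ ω ∂μ, ∀ t ∈ Finset.Icc 1 T, |X t ω| ≤ R ∧ |Y t ω| ≤ R ∧ 0 ≤ W t ω := by
    rw [Filter.eventually_all_finset]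
    intro t ht
    filter_upwards [hbdd t ht, hYb t ht, hWnn t] with ω u1 u2 u3 using ⟨u1, u2, u3⟩
  have hSm : Measurable[m0] S := by
    apply Finset.measurable_sum
    intro t ht
    exact (hXm t ht).sub ((stronglyMeasurable_condExp (m := 𝒜 (t-1))).measurable.mono (hle _) le_rfl)
  have hVm : Measurable[m0] V := by
    apply Finset.measurable_sum
    intro t ht
    exact (stronglyMeasurable_condExp (m := 𝒜 (t-1))).measurable.mono (hle _) le_rfl
  -- integrability of the exponential processes
  have hintf : ∀ c : ℝ, |c| * (2 * R) ≤ 1 →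
      Integrable (fun ω => Real.exp (c * S ω - c ^ 2 * V ω)) μ := by
    intro c hc
    refine int_of_bound ((Real.measurable_exp.comp
      ((hSm.const_mul c).sub (hVm.const_mul (c ^ 2)))).aestronglyMeasurable) (Real.exp T) ?_
    filter_upwards [hall] with ω u
    rw [abs_of_pos (Real.exp_pos _), Real.exp_le_exp]
    have hS : c * S ω ≤ T := by
      calc c * S ω ≤ |c * S ω| := le_abs_self _
        _ = |c| * |S ω| := abs_mul _ _
        _ ≤ |c| * ∑ t ∈ Finset.Icc 1 T, |X t ω - Y t ω| := by
            gcongr; exact Finset.abs_sum_le_sum_abs _ _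
        _ = ∑ t ∈ Finset.Icc 1 T, |c| * |X t ω - Y t ω| := Finset.mul_sum _ _ _
        _ ≤ ∑ t ∈ Finset.Icc 1 T, 1 := by
            apply Finset.sum_le_sum
            intro t ht
            obtain ⟨u1, u2, _⟩ := u t ht
            calc |c| * |X t ω - Y t ω| ≤ |c| * (2 * R) := by
                  gcongr
                  calc |X t ω - Y t ω| ≤ |X t ω| + |Y t ω| := abs_sub _ _
                    _ ≤ 2 * R := by linarith
              _ ≤ 1 := hc
        _ ≤ T := by simp [Nat.card_Icc]
    have hV : 0 ≤ c ^ 2 * V ω := by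
      apply mul_nonneg (sq_nonneg c)
      apply Finset.sum_nonneg
      intro t ht
      exact (u t ht).2.2
    linarith
  -- supermartingale bounds
  have hI1 : ∫ ω, Real.exp (lam * S ω - lam ^ 2 * V ω) ∂μ ≤ 1 := by
    have := super_bound T 𝒜 hmono hle X R hR hmeas hbdd lam hc1 T le_rfl
    exact this
  have hI2 : ∫ ω, Real.exp (-lam * S ω - (-lam) ^ 2 * V ω) ∂μ ≤ 1 := by
    have := super_bound T 𝒜 hmono hle X R hR hmeas hbdd (-lam) hc2 T le_rfl
    exact this
  -- Markov
  have hδ2 : (0:ℝ) < 2 / δ := by positivity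
  have markov : ∀ f : Ω → ℝ, Integrable f μ → (∀ ω, 0 ≤ f ω) → (∫ ω, f ω ∂μ ≤ 1) →
      μ {ω | 2 / δ ≤ f ω} ≤ ENNReal.ofReal (δ / 2) := by
    intro f hint hnn hle1
    have h := mul_meas_ge_le_integral_of_nonneg (ae_of_all μ hnn) hint (2 / δ)
    have h2 : (μ {ω | 2 / δ ≤ f ω}).toReal ≤ δ / 2 := by
      by_contra hcon
      push_neg at hcon
      have := mul_lt_mul_of_pos_left hcon hδ2
      have h3 : 2 / δ * (δ / 2) = 1 := by field_simp
      rw [measureReal_def] at h; nlinarith [h, hle1]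
    rw [← ENNReal.le_ofReal_iff_toReal_le (measure_ne_top μ _) (by positivity)] at h2
    exact h2
  have hA := markov _ (hintf lam hc1) (fun ω => (Real.exp_pos _).le) hI1
  have hB := markov _ (hintf (-lam) hc2) (fun ω => (Real.exp_pos _).le) hI2
  -- set containment
  set D : Set Ω := {ω | |S ω| ≤ lam * ∑ t ∈ Finset.Icc 1 T, (2 * R * |Y t ω| + W t ω) + L / lam}
    with hDdef
  have hsub : Dᶜ ⊆ {ω | 2 / δ ≤ Real.exp (lam * S ω - lam ^ 2 * V ω)}
      ∪ {ω | 2 / δ ≤ Real.exp (-lam * S ω - (-lam) ^ 2 * V ω)} := by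
    intro ω hω
    by_contra hcon
    simp only [Set.mem_union, Set.mem_setOf_eq, not_or, not_le] at hcon
    obtain ⟨h1, h2⟩ := hcon
    apply hω
    have k1 : lam * S ω - lam ^ 2 * V ω < L := by
      have := Real.log_lt_log (Real.exp_pos _) h1
      rwa [Real.log_exp] at this
    have k2 : -lam * S ω - lam ^ 2 * V ω < L := by
      have := Real.log_lt_log (Real.exp_pos _) h2
      rw [Real.log_exp] at this
      rw [neg_sq] at this
      exact this
    have hq : (lam ^ 2 * V ω + L) / lam = lam * V ω + L / lam := by
      field_simp
    have habs : |S ω| ≤ lam * V ω + L / lam := by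
      rw [abs_le]
      constructor
      · have h5 : -S ω < (lam ^ 2 * V ω + L) / lam := by
          rw [lt_div_iff₀ hlam]; nlinarith [k2]
        rw [hq] at h5; linarith
      · have h5 : S ω < (lam ^ 2 * V ω + L) / lam := by
          rw [lt_div_iff₀ hlam]; nlinarith [k1]
        rw [hq] at h5; linarith
    show |S ω| ≤ _
    refine habs.trans ?_
    have hVle : V ω ≤ ∑ t ∈ Finset.Icc 1 T, (2 * R * |Y t ω| + W t ω) := by
      apply Finset.sum_le_sum
      intro t ht
      have : 0 ≤ 2 * R * |Y t ω| := by positivity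
      linarith
    have := mul_le_mul_of_nonneg_left hVle hlam.le
    linarith
  have hDc : μ Dᶜ ≤ ENNReal.ofReal δ := by
    calc μ Dᶜ ≤ μ ({ω | 2 / δ ≤ Real.exp (lam * S ω - lam ^ 2 * V ω)}
        ∪ {ω | 2 / δ ≤ Real.exp (-lam * S ω - (-lam) ^ 2 * V ω)}) := measure_mono hsub
      _ ≤ μ {ω | 2 / δ ≤ Real.exp (lam * S ω - lam ^ 2 * V ω)}
          + μ {ω | 2 / δ ≤ Real.exp (-lam * S ω - (-lam) ^ 2 * V ω)} := measure_union_le _ _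
      _ ≤ ENNReal.ofReal (δ / 2) + ENNReal.ofReal (δ / 2) := add_le_add hA hB
      _ = ENNReal.ofReal δ := by
          rw [← ENNReal.ofReal_add (by positivity) (by positivity)]
          norm_num
  have huniv : (1:ENNReal) ≤ μ D + ENNReal.ofReal δ := by
    calc (1:ENNReal) = μ Set.univ := (measure_univ).symm
      _ = μ (D ∪ Dᶜ) := by rw [Set.union_compl_self]
      _ ≤ μ D + μ Dᶜ := measure_union_le _ _
      _ ≤ μ D + ENNReal.ofReal δ := add_le_add_right hDc _
  have hfin : ENNReal.ofReal δ ≠ ⊤ := ENNReal.ofReal_ne_top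
  have hsum : ENNReal.ofReal (1 - δ) + ENNReal.ofReal δ = 1 := by
    rw [← ENNReal.ofReal_add (by linarith) hδ.le]
    norm_num
  have : ENNReal.ofReal (1 - δ) + ENNReal.ofReal δ ≤ μ D + ENNReal.ofReal δ := by
    rw [hsum]; exact huniv
  have hfinal : ENNReal.ofReal (1 - δ) ≤ μ D :=
    (ENNReal.add_le_add_iff_right hfin).1 this
  exact hfinal
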